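/- arXiv:2010.13151 — 2 statements merged into one kernel-verified Lean document; each statement's English description precedes it below -/
import Mathlib

section
/- Let p ≥ 2 be a real number and let a, b, c, d be reals with a ≥ b > 0, 0 ≤ c < a, 0 ≤ d < b. Then |(a^p − c^p)/a^{p−1} − (b^p − d^p)/b^{p−1}| ≤ p(a − b) + p|c − d|. -/
lemma rpow_sub_rpow_le (q u v : ℝ) (hq : 1 ≤ q) (hu : 0 ≤ u) (huv : u ≤ v) :
    v ^ q - u ^ q ≤ q * v ^ (q - 1) * (v - u) := by
  rcases eq_or_lt_of_le (hu.trans huv) with h | hv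
  · have hv0 : v = 0 := h.symm
    have hu0 : u = 0 := le_antisymm (hv0 ▸ huv) hu
    simp [hv0, hu0]
  · have hs : -1 ≤ u / v - 1 := by
      have : 0 ≤ u / v := div_nonneg hu hv.le
      linarith
    have hB := one_add_mul_self_le_rpow_one_add hs hq
    rw [show (1 : ℝ) + (u / v - 1) = u / v by ring] at hB
    rw [Real.div_rpow hu hv.le] at hB
    have hvq : (0:ℝ) < v ^ q := Real.rpow_pos_of_pos hv q
    have hvq1 : v ^ (q - 1) = v ^ q / v := by
      rw [Real.rpow_sub hv, Real.rpow_one]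
    rw [hvq1]
    have h2 : (1 + q * (u / v - 1)) * v ^ q ≤ u ^ q := by
      calc (1 + q * (u / v - 1)) * v ^ q ≤ (u ^ q / v ^ q) * v ^ q := by
            exact mul_le_mul_of_nonneg_right hB hvq.le
        _ = u ^ q := by field_simp
    have : q * (u / v - 1) * v ^ q = q * (v ^ q / v) * (u - v) := by
      field_simp
    nlinarith [this]

/-- an elementary inequality for real powers `p ≥ 2`. -/
theorem abs_div_rpow_sub_div_rpow_le
    (p a b c d : ℝ) (hp : 2 ≤ p) (hba : b ≤ a) (hb : 0 < b)
    (hc : 0 ≤ c) (hca : c < a) (hd : 0 ≤ d) (hdb : d < b) :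
    |(a ^ p - c ^ p) / a ^ (p - 1) - (b ^ p - d ^ p) / b ^ (p - 1)| ≤
      p * (a - b) + p * |c - d| := by
  have ha : 0 < a := lt_of_lt_of_le hb hba
  have hp1 : (1:ℝ) ≤ p - 1 := by linarith
  have hA : (0:ℝ) < a ^ (p - 1) := Real.rpow_pos_of_pos ha _
  have hB : (0:ℝ) < b ^ (p - 1) := Real.rpow_pos_of_pos hb _
  have hBA : b ^ (p - 1) ≤ a ^ (p - 1) :=
    Real.rpow_le_rpow hb.le hba (by linarith)
  -- rewrite the main quotients
  have hrwa : a ^ p / a ^ (p - 1) = a := by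
    rw [← Real.rpow_sub ha]; norm_num
  have hrwb : b ^ p / b ^ (p - 1) = b := by
    rw [← Real.rpow_sub hb]; norm_num
  have hE : (a ^ p - c ^ p) / a ^ (p - 1) - (b ^ p - d ^ p) / b ^ (p - 1)
      = (a - b) - (c ^ p - d ^ p) / a ^ (p - 1)
        + d ^ p * (1 / b ^ (p - 1) - 1 / a ^ (p - 1)) := by
    rw [sub_div, sub_div, hrwa, hrwb]; ring
  rw [hE]
  -- Bound 1 : |(c^p - d^p)/a^(p-1)| ≤ p * |c - d|
  have hcd : |c ^ p - d ^ p| ≤ p * |c - d| * a ^ (p - 1) := by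
    have key : ∀ u v : ℝ, 0 ≤ u → u ≤ v → v ≤ a →
        v ^ p - u ^ p ≤ p * (v - u) * a ^ (p - 1) := by
      intro u v hu huv hva
      have h1 := rpow_sub_rpow_le p u v (by linarith) hu huv
      have h2 : v ^ (p - 1) ≤ a ^ (p - 1) :=
        Real.rpow_le_rpow (hu.trans huv) hva (by linarith)
      have h3 : p * v ^ (p - 1) * (v - u) ≤ p * a ^ (p - 1) * (v - u) :=
        mul_le_mul_of_nonneg_right
          (mul_le_mul_of_nonneg_left h2 (by linarith)) (by linarith)
      linarith
    rcases le_total d c with h | h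
    · have h0 : d ^ p ≤ c ^ p := Real.rpow_le_rpow hd h (by linarith)
      rw [abs_of_nonneg (by linarith), abs_of_nonneg (by linarith)]
      exact key d c hd h hca.le
    · have h0 : c ^ p ≤ d ^ p := Real.rpow_le_rpow hc h (by linarith)
      rw [abs_of_nonpos (by linarith), abs_of_nonpos (by linarith)]
      have := key c d hc h (by linarith)
      linarith
  have hb1 : |(c ^ p - d ^ p) / a ^ (p - 1)| ≤ p * |c - d| := by
    rw [abs_div, abs_of_pos hA, div_le_iff₀ hA]
    exact hcd
  -- Bound 2 : d^p * (1/B - 1/A) ≤ (p-1) * (a - b)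
  have hdpnn : (0:ℝ) ≤ d ^ p := Real.rpow_nonneg hd p
  have hinv : 1 / a ^ (p - 1) ≤ 1 / b ^ (p - 1) :=
    one_div_le_one_div_of_le hB hBA
  have hABle : a ^ (p - 1) - b ^ (p - 1) ≤ (p - 1) * a ^ (p - 2) * (a - b) := by
    have := rpow_sub_rpow_le (p - 1) b a hp1 hb.le hba
    rw [show p - 1 - 1 = p - 2 by ring] at this
    exact this
  have hdpB : d ^ p ≤ d * b ^ (p - 1) := by
    rcases eq_or_lt_of_le hd with h0 | h0
    · rw [← h0, Real.zero_rpow (by positivity)]; positivity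
    · have : d ^ p = d ^ (p - 1) * d := by
        rw [← Real.rpow_add_one h0.ne' (p - 1)]; norm_num
      rw [this]
      have : d ^ (p - 1) ≤ b ^ (p - 1) :=
        Real.rpow_le_rpow hd hdb.le (by linarith)
      nlinarith
  have hAa : a ^ (p - 1) = a ^ (p - 2) * a := by
    rw [← Real.rpow_add_one ha.ne' (p - 2)]; ring_nf
  have hAanng : (0:ℝ) ≤ a ^ (p - 2) := Real.rpow_nonneg ha.le _
  have hb2 : d ^ p * (1 / b ^ (p - 1) - 1 / a ^ (p - 1)) ≤ (p - 1) * (a - b) := by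
    have heq : d ^ p * (1 / b ^ (p - 1) - 1 / a ^ (p - 1))
        = d ^ p * (a ^ (p - 1) - b ^ (p - 1)) / (a ^ (p - 1) * b ^ (p - 1)) := by
      rw [eq_div_iff (by positivity)]
      field_simp
    rw [heq, div_le_iff₀ (by positivity)]
    have h1 : d ^ p * (a ^ (p - 1) - b ^ (p - 1)) ≤
        d * b ^ (p - 1) * ((p - 1) * a ^ (p - 2) * (a - b)) := by
      have hge : 0 ≤ a ^ (p - 1) - b ^ (p - 1) := by linarith
      have := mul_le_mul hdpB hABle hge (by positivity)
      linarith
    have h2 : d * b ^ (p - 1) * ((p - 1) * a ^ (p - 2) * (a - b)) ≤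
        (p - 1) * (a - b) * (a ^ (p - 1) * b ^ (p - 1)) := by
      rw [hAa]
      have hda : d ≤ a := by linarith
      have key : 0 ≤ (p - 1) * ((a - b) * (a ^ (p - 2) * (b ^ (p - 1) * (a - d)))) :=
        mul_nonneg (by linarith)
          (mul_nonneg (by linarith)
            (mul_nonneg hAanng (mul_nonneg hB.le (by linarith))))
      nlinarith [key]
    linarith
  have hb2nn : 0 ≤ d ^ p * (1 / b ^ (p - 1) - 1 / a ^ (p - 1)) := by
    have : 0 ≤ 1 / b ^ (p - 1) - 1 / a ^ (p - 1) := by linarith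
    positivity
  calc |(a - b) - (c ^ p - d ^ p) / a ^ (p - 1)
        + d ^ p * (1 / b ^ (p - 1) - 1 / a ^ (p - 1))|
      ≤ |(a - b) - (c ^ p - d ^ p) / a ^ (p - 1)|
        + |d ^ p * (1 / b ^ (p - 1) - 1 / a ^ (p - 1))| := abs_add_le _ _
    _ ≤ (|a - b| + |(c ^ p - d ^ p) / a ^ (p - 1)|)
        + |d ^ p * (1 / b ^ (p - 1) - 1 / a ^ (p - 1))| := by
          exact add_le_add_left (abs_sub _ _) _
    _ ≤ p * (a - b) + p * |c - d| := by
          rw [abs_of_nonneg (by linarith : (0:ℝ) ≤ a - b),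
            abs_of_nonneg hb2nn]
          have hcdnn : 0 ≤ |c - d| := abs_nonneg _
          linarith
end

section
/- Let p ≥ 2 be a real number and set j_p(t) = |t|^{p−2} t for t ∈ ℝ. Let a, b, c, d > 0 be reals and set φ₁ = (a^p − c^p)⁺ and φ₂ = (b^p − d^p)⁺ (positive parts). Then j_p(c − d)·(φ₁/c^{p−1} − φ₂/d^{p−1}) ≤ j_p(a − b)·(φ₁/a^{p−1} − φ₂/b^{p−1}). -/
open Real

lemma key_conv (p l x y : ℝ) (hp : 1 ≤ p) (h0 : 0 < l) (h1 : l < 1)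
    (hx : 0 ≤ x) (hy : 0 ≤ y) :
    l ^ (p - 1) * x ^ p ≤ |x - y| ^ p + (l / (1 - l)) ^ (p - 1) * y ^ p := by
  have h1' : 0 < 1 - l := by linarith
  have hc := convexOn_rpow hp
  have hA : (|x - y| / l) ∈ Set.Ici (0:ℝ) := Set.mem_Ici.2 (by positivity)
  have hB : (y / (1 - l)) ∈ Set.Ici (0:ℝ) := Set.mem_Ici.2 (by positivity)
  have hconv := hc.2 hA hB (le_of_lt h0) (le_of_lt h1') (by ring)
  simp only [smul_eq_mul] at hconv
  have hxle : x ≤ l * (|x - y| / l) + (1 - l) * (y / (1 - l)) := by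
    rw [mul_div_cancel₀ _ (ne_of_gt h0), mul_div_cancel₀ _ (ne_of_gt h1')]
    calc x = (x - y) + y := by ring
    _ ≤ |x - y| + y := by gcongr; exact le_abs_self _
  have hx2 : x ^ p ≤ l * (|x - y| / l) ^ p + (1 - l) * (y / (1 - l)) ^ p :=
    (rpow_le_rpow hx hxle (by linarith)).trans hconv
  rw [div_rpow (abs_nonneg _) h0.le, div_rpow hy h1'.le] at hx2
  have hlp1 : (0:ℝ) < l ^ (p-1) := rpow_pos_of_pos h0 (p-1)
  have key : l ^ (p-1) * x ^ p ≤
      l ^ (p-1) * (l * (|x - y| ^ p / l ^ p)) +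
      l ^ (p-1) * ((1 - l) * (y ^ p / (1 - l) ^ p)) := by
    rw [← mul_add]
    exact mul_le_mul_of_nonneg_left hx2 hlp1.le
  have el : l ^ (p-1) * l = l ^ p := by
    rw [← rpow_add_one h0.ne']; ring_nf
  have eA : l ^ (p-1) * (l * (|x - y| ^ p / l ^ p)) = |x - y| ^ p := by
    rw [show l ^ (p-1) * (l * (|x - y| ^ p / l ^ p)) =
      (l ^ (p-1) * l) * (|x - y| ^ p / l ^ p) by ring, el, mul_comm,
      div_mul_cancel₀ _ (rpow_pos_of_pos h0 p).ne']
  have eB : l ^ (p-1) * ((1 - l) * (y ^ p / (1 - l) ^ p)) =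
      (l / (1 - l)) ^ (p - 1) * y ^ p := by
    rw [div_rpow h0.le h1'.le, rpow_sub_one h1'.ne']
    field_simp
  rw [eA, eB] at key
  exact key

/-- Discrete Picone, case u2 < u1. -/
lemma picone_gt (p u1 u2 v1 v2 : ℝ) (hp : 2 ≤ p) (hu2 : 0 < u2) (h : u2 < u1)
    (hv1 : 0 ≤ v1) (hv2 : 0 ≤ v2) :
    |u1 - u2| ^ (p-2) * (u1 - u2) * (v1 ^ p / u1 ^ (p-1) - v2 ^ p / u2 ^ (p-1))
      ≤ |v1 - v2| ^ p := by
  have hu1 : 0 < u1 := hu2.trans h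
  have hd : 0 < u1 - u2 := by linarith
  have habs : |u1 - u2| = u1 - u2 := abs_of_pos hd
  have hj : |u1 - u2| ^ (p-2) * (u1 - u2) = (u1 - u2) ^ (p-1) := by
    rw [habs, ← rpow_add_one hd.ne']; ring_nf
  set l : ℝ := (u1 - u2) / u1 with hl
  have h0 : 0 < l := by positivity
  have h1 : l < 1 := by
    rw [hl, div_lt_one hu1]; linarith
  have hkey := key_conv p l v1 v2 (by linarith) h0 h1 hv1 hv2
  have e1 : l ^ (p-1) = (u1 - u2) ^ (p-1) / u1 ^ (p-1) := div_rpow hd.le hu1.le _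
  have e2 : l / (1 - l) = (u1 - u2) / u2 := by
    rw [hl]; field_simp; rw [sub_sub_cancel, div_self hu2.ne']
  have e3 : (l / (1-l)) ^ (p-1) = (u1 - u2) ^ (p-1) / u2 ^ (p-1) := by
    rw [e2]; exact div_rpow hd.le hu2.le _
  rw [e1, e3] at hkey
  rw [hj]
  calc (u1 - u2) ^ (p-1) * (v1 ^ p / u1 ^ (p-1) - v2 ^ p / u2 ^ (p-1))
      = (u1 - u2) ^ (p-1) / u1 ^ (p-1) * v1 ^ p
        - (u1 - u2) ^ (p-1) / u2 ^ (p-1) * v2 ^ p := by ring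
    _ ≤ |v1 - v2| ^ p := by linarith

/-- Discrete Picone, general. -/
lemma picone (p u1 u2 v1 v2 : ℝ) (hp : 2 ≤ p) (hu1 : 0 < u1) (hu2 : 0 < u2)
    (hv1 : 0 ≤ v1) (hv2 : 0 ≤ v2) :
    |u1 - u2| ^ (p-2) * (u1 - u2) * (v1 ^ p / u1 ^ (p-1) - v2 ^ p / u2 ^ (p-1))
      ≤ |v1 - v2| ^ p := by
  rcases lt_trichotomy u1 u2 with h | h | h
  · have := picone_gt p u2 u1 v2 v1 hp hu1 h hv2 hv1
    calc |u1 - u2| ^ (p-2) * (u1 - u2) * (v1 ^ p / u1 ^ (p-1) - v2 ^ p / u2 ^ (p-1))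
        = |u2 - u1| ^ (p-2) * (u2 - u1) * (v2 ^ p / u2 ^ (p-1) - v1 ^ p / u1 ^ (p-1)) := by
          rw [abs_sub_comm]; ring
      _ ≤ |v2 - v1| ^ p := this
      _ = |v1 - v2| ^ p := by rw [abs_sub_comm]
  · subst h; simp [rpow_nonneg (abs_nonneg _)]
  · exact picone_gt p u1 u2 v1 v2 hp hu2 h hv1 hv2

lemma jp_mono (p : ℝ) (hp : 2 ≤ p) : Monotone (fun t : ℝ => |t| ^ (p-2) * t) := by
  have hnn : ∀ t : ℝ, 0 ≤ t → |t| ^ (p-2) * t = t ^ (p-1) := by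
    intro t ht
    rcases eq_or_lt_of_le ht with h | h
    · rw [← h]; simp [zero_rpow (show p - 1 ≠ 0 by intro h; linarith [h])]
    · rw [abs_of_pos h, ← rpow_add_one h.ne']; ring_nf
  intro s t hst
  rcases le_or_gt 0 s with hs | hs
  · have ht : 0 ≤ t := hs.trans hst
    simp only
    rw [hnn s hs, hnn t ht]
    exact rpow_le_rpow hs hst (by linarith)
  · rcases le_or_gt 0 t with ht | ht
    · simp only
      have h1 : |s| ^ (p-2) * s ≤ 0 :=
        mul_nonpos_of_nonneg_of_nonpos (rpow_nonneg (abs_nonneg _) _) hs.le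
      have h2 : 0 ≤ |t| ^ (p-2) * t :=
        mul_nonneg (rpow_nonneg (abs_nonneg _) _) ht
      linarith
    · simp only
      have h1 : |s| ^ (p-2) * s = -((-s) ^ (p-1)) := by
        rw [abs_of_neg hs]
        have := hnn (-s) (by linarith)
        rw [abs_of_pos (by linarith : (0:ℝ) < -s)] at this
        nlinarith [this]
      have h2 : |t| ^ (p-2) * t = -((-t) ^ (p-1)) := by
        rw [abs_of_neg ht]
        have := hnn (-t) (by linarith)
        rw [abs_of_pos (by linarith : (0:ℝ) < -t)] at this
        nlinarith [this]
      rw [h1, h2, neg_le_neg_iff]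
      exact rpow_le_rpow (by linarith) (by linarith) (by linarith)

lemma jp_div (p t s : ℝ) (hp : 2 ≤ p) (hs : 0 < s) :
    |t| ^ (p-2) * t / s ^ (p-1) = |t / s| ^ (p-2) * (t / s) := by
  rw [abs_div, abs_of_pos hs, div_rpow (abs_nonneg t) hs.le]
  rw [show s ^ (p-1) = s ^ (p-2) * s by rw [← rpow_add_one hs.ne']; ring_nf]
  field_simp

lemma jp_mul_self (p t : ℝ) (hp : 2 ≤ p) : |t| ^ (p-2) * t * t = |t| ^ p := by
  rcases eq_or_ne t 0 with h | h
  · subst h; simp [zero_rpow (show p ≠ 0 by linarith)]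
  · have ht : |t| ≠ 0 := abs_ne_zero.2 h
    rw [mul_assoc, ← abs_mul_abs_self, ← mul_assoc,
      ← rpow_add_one ht, ← rpow_add_one ht, show p - 2 + 1 + 1 = p by ring]



/-- a discrete inequality in the spirit of Picone's inequality,
with `j_p(t) = |t|^{p-2} t` and positive parts `φ₁ = (a^p - c^p)⁺`,
`φ₂ = (b^p - d^p)⁺`. -/
theorem jp_mul_trunc_div_le
    (p a b c d : ℝ) (hp : 2 ≤ p) (ha : 0 < a) (hb : 0 < b) (hc : 0 < c)
    (hd : 0 < d) :
    |c - d| ^ (p - 2) * (c - d) *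
        (max (a ^ p - c ^ p) 0 / c ^ (p - 1) - max (b ^ p - d ^ p) 0 / d ^ (p - 1)) ≤
      |a - b| ^ (p - 2) * (a - b) *
        (max (a ^ p - c ^ p) 0 / a ^ (p - 1) - max (b ^ p - d ^ p) 0 / b ^ (p - 1)) := by
  have hp0 : (0:ℝ) ≤ p := by linarith
  rcases le_or_gt a c with hac | hac
  · have hm1 : max (a ^ p - c ^ p) 0 = 0 :=
      max_eq_right (sub_nonpos.2 (rpow_le_rpow ha.le hac hp0))
    rcases le_or_gt b d with hbd | hbd
    · have hm2 : max (b ^ p - d ^ p) 0 = 0 :=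
        max_eq_right (sub_nonpos.2 (rpow_le_rpow hb.le hbd hp0))
      rw [hm1, hm2]; simp
    · have hm2 : max (b ^ p - d ^ p) 0 = b ^ p - d ^ p :=
        max_eq_left (sub_nonneg.2 (rpow_le_rpow hd.le hbd.le hp0))
      rw [hm1, hm2]
      have hψ : 0 ≤ b ^ p - d ^ p := sub_nonneg.2 (rpow_le_rpow hd.le hbd.le hp0)
      have hdiv : (a - b) / b ≤ (c - d) / d := by
        rw [div_le_div_iff₀ hb hd]
        nlinarith
      have hm := jp_mono p hp hdiv
      simp only at hm
      rw [← jp_div p _ _ hp hb, ← jp_div p _ _ hp hd] at hm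
      have hmul := mul_le_mul_of_nonneg_right hm hψ
      calc |c - d| ^ (p-2) * (c - d) *
            (0 / c ^ (p-1) - (b ^ p - d ^ p) / d ^ (p-1))
          = -(|c - d| ^ (p-2) * (c - d) / d ^ (p-1) * (b ^ p - d ^ p)) := by ring
        _ ≤ -(|a - b| ^ (p-2) * (a - b) / b ^ (p-1) * (b ^ p - d ^ p)) := by linarith
        _ = |a - b| ^ (p-2) * (a - b) *
            (0 / a ^ (p-1) - (b ^ p - d ^ p) / b ^ (p-1)) := by ring
  · have hm1 : max (a ^ p - c ^ p) 0 = a ^ p - c ^ p :=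
      max_eq_left (sub_nonneg.2 (rpow_le_rpow hc.le hac.le hp0))
    have hφ : 0 ≤ a ^ p - c ^ p := sub_nonneg.2 (rpow_le_rpow hc.le hac.le hp0)
    rcases le_or_gt b d with hbd | hbd
    · have hm2 : max (b ^ p - d ^ p) 0 = 0 :=
        max_eq_right (sub_nonpos.2 (rpow_le_rpow hb.le hbd hp0))
      rw [hm1, hm2]
      have hdiv : (c - d) / c ≤ (a - b) / a := by
        rw [div_le_div_iff₀ hc ha]
        nlinarith
      have hm := jp_mono p hp hdiv
      simp only at hm
      rw [← jp_div p _ _ hp hc, ← jp_div p _ _ hp ha] at hm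
      have hmul := mul_le_mul_of_nonneg_right hm hφ
      calc |c - d| ^ (p-2) * (c - d) *
            ((a ^ p - c ^ p) / c ^ (p-1) - 0 / d ^ (p-1))
          = |c - d| ^ (p-2) * (c - d) / c ^ (p-1) * (a ^ p - c ^ p) := by ring
        _ ≤ |a - b| ^ (p-2) * (a - b) / a ^ (p-1) * (a ^ p - c ^ p) := hmul
        _ = |a - b| ^ (p-2) * (a - b) *
            ((a ^ p - c ^ p) / a ^ (p-1) - 0 / b ^ (p-1)) := by ring
    · have hm2 : max (b ^ p - d ^ p) 0 = b ^ p - d ^ p :=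
        max_eq_left (sub_nonneg.2 (rpow_le_rpow hd.le hbd.le hp0))
      rw [hm1, hm2]
      have h1 := picone p c d a b hp hc hd ha.le hb.le
      have h2 := picone p a b c d hp ha hb hc.le hd.le
      have epow : ∀ x : ℝ, 0 < x → x ^ p / x ^ (p-1) = x := by
        intro x hx
        rw [← rpow_sub hx, show p - (p-1) = (1:ℝ) by ring, rpow_one]
      have e1 : (a ^ p - c ^ p) / c ^ (p-1) = a ^ p / c ^ (p-1) - c := by
        rw [sub_div, epow c hc]
      have e2 : (b ^ p - d ^ p) / d ^ (p-1) = b ^ p / d ^ (p-1) - d := by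
        rw [sub_div, epow d hd]
      have e3 : (a ^ p - c ^ p) / a ^ (p-1) = a - c ^ p / a ^ (p-1) := by
        rw [sub_div, epow a ha]
      have e4 : (b ^ p - d ^ p) / b ^ (p-1) = b - d ^ p / b ^ (p-1) := by
        rw [sub_div, epow b hb]
      rw [e1, e2, e3, e4]
      have jcd := jp_mul_self p (c - d) hp
      have jab := jp_mul_self p (a - b) hp
      nlinarith [h1, h2, jcd, jab]
end
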